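/- Let M be an NFA over alphabet Σ and let M' be obtained from M by adding a new symbol # with a transition on # from each final state of M back to the initial state q₀, and then making all states of M' final. Then L(M) = Σ* if and only if L(M') = (Σ ∪ {#})*. -/

import Mathlib

open Classical in

theorem asf_construction_universality {α σ : Type} (M : NFA α σ) (q₀ : σ)
    (hstart : M.start = {q₀})
    (M' : NFA (Option α) σ)
    (hstep : ∀ q a, M'.step q (some a) = M.step q a)
    (hsharp : ∀ q, M'.step q none = (if q ∈ M.accept then {q₀} else ∅ : Set σ))
    (hstart' : M'.start = {q₀}) (hacc' : M'.accept = Set.univ) :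
    M.accepts = ⊤ ↔ M'.accepts = ⊤ := by
  have stepSome : ∀ (S : Set σ) (b : α), M'.stepSet S (some b) = M.stepSet S b := by
    intro S b
    simp [NFA.stepSet, hstep]
  have lemA : ∀ (w : List α) (S : Set σ),
      M'.evalFrom S (w.map some) = M.evalFrom S w := by
    intro w
    induction w with
    | nil => intro S; rfl
    | cons a w ih =>
      intro S
      simp only [List.map_cons, NFA.evalFrom, List.foldl_cons] at *
      rw [show M'.stepSet S (some a) = M.stepSet S a from stepSome S a]
      exact ih _
  have mono : ∀ (S T : Set σ) (a : Option α), S ⊆ T →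
      M'.stepSet S a ⊆ M'.stepSet T a := by
    intro S T a h q hq
    rw [NFA.mem_stepSet] at hq ⊢
    obtain ⟨s, hs, h2⟩ := hq
    exact ⟨s, h hs, h2⟩
  constructor
  · intro hM
    have key : ∀ x : List (Option α), ∃ w : List α,
        M.evalFrom M.start w ⊆ M'.evalFrom M'.start x := by
      intro x
      induction x using List.reverseRecOn with
      | nil =>
        refine ⟨[], ?_⟩
        simp [NFA.evalFrom, hstart, hstart']
      | append_singleton x a ih =>
        obtain ⟨w, hw⟩ := ih
        cases a with
        | some b =>
          refine ⟨w ++ [b], ?_⟩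
          rw [NFA.evalFrom_append, NFA.evalFrom_singleton, NFA.evalFrom_append, NFA.evalFrom_singleton, stepSome]
          intro q hq
          rw [NFA.mem_stepSet] at hq ⊢
          obtain ⟨s, hs, h2⟩ := hq
          exact ⟨s, hw hs, h2⟩
        | none =>
          refine ⟨[], ?_⟩
          have hwacc : w ∈ M.accepts := by rw [hM]; trivial
          rw [NFA.mem_accepts] at hwacc
          obtain ⟨q, hqacc, hqev⟩ := hwacc
          rw [NFA.evalFrom_append, NFA.evalFrom_singleton]
          intro s hs
          simp only [NFA.evalFrom, List.foldl_nil, hstart, Set.mem_singleton_iff] at hs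
          subst hs
          rw [NFA.mem_stepSet]
          refine ⟨q, hw hqev, ?_⟩
          rw [hsharp, if_pos hqacc]
          rfl
    apply Set.eq_univ_of_forall
    intro x
    obtain ⟨w, hw⟩ := key x
    have hwacc : w ∈ M.accepts := by rw [hM]; trivial
    rw [NFA.mem_accepts] at hwacc
    obtain ⟨q, hqacc, hqev⟩ := hwacc
    change x ∈ M'.accepts; rw [NFA.mem_accepts]
    exact ⟨q, by rw [hacc']; trivial, hw hqev⟩
  · intro hM'
    apply Set.eq_univ_of_forall
    intro w
    have hx : (w.map some ++ [none]) ∈ M'.accepts := by rw [hM']; trivial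
    rw [NFA.mem_accepts] at hx
    obtain ⟨q, _, hqev⟩ := hx
    rw [NFA.evalFrom_append, NFA.evalFrom_singleton, lemA, NFA.mem_stepSet] at hqev
    obtain ⟨s, hs, h2⟩ := hqev
    rw [hsharp] at h2
    by_cases hacc : s ∈ M.accept
    · change w ∈ M.accepts; rw [NFA.mem_accepts]
      refine ⟨s, hacc, ?_⟩
      rw [hstart]
      rw [hstart'] at hs
      exact hs
    · rw [if_neg hacc] at h2
      exact absurd h2 (Set.notMem_empty q)
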